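/- For all r > 0 one has ψ₁(r) ≤ C₀(ε,c)·ψ₂(r), where C₀(ε,c) = max{ (2e²/ε)(1 + 2/√ε)√(2/(c-ε)), ((2+√ε)/(ε(1-e^{-2})))( 2√2·e²/√(ε(c-ε)) + 1/(c-ε) ) }. -/

import Mathlib

open MeasureTheory Real

/-- `ψ₁ c ε r = ∫₀^r e^{c s²/2} (∫_s^∞ e^{-(c-ε) u²/2} du) ds`. -/
noncomputable def psi1 (c ε r : ℝ) : ℝ :=
  ∫ s in (0:ℝ)..r, Real.exp (c * s ^ 2 / 2) * ∫ u in Set.Ioi s, Real.exp (-(c - ε) * u ^ 2 / 2)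

/-- `ψ₂ ε r = (e^{ε r²/2} - 1)/(r(1+r))`. -/
noncomputable def psi2 (ε r : ℝ) : ℝ :=
  (Real.exp (ε * r ^ 2 / 2) - 1) / (r * (1 + r))

/-- The explicit constant `C₀(ε,c)` of Lemma 2.4. -/
noncomputable def C0const (ε c : ℝ) : ℝ :=
  max ((2 * Real.exp 2 / ε) * (1 + 2 / Real.sqrt ε) * Real.sqrt (2 / (c - ε)))
    (((2 + Real.sqrt ε) / (ε * (1 - Real.exp (-2)))) *
      (2 * Real.sqrt 2 * Real.exp 2 / Real.sqrt (ε * (c - ε)) + 1 / (c - ε)))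

namespace Stmt3Aux

open Set

noncomputable def tail (a s : ℝ) : ℝ := ∫ u in Set.Ioi s, Real.exp (-a * u ^ 2 / 2)

lemma gauss_eq (a : ℝ) : (fun u : ℝ => Real.exp (-a * u ^ 2 / 2)) =
    fun u : ℝ => Real.exp (-(a/2) * u ^ 2) := by
  funext u; ring_nf

lemma gauss_integrable {a : ℝ} (ha : 0 < a) :
    Integrable (fun u : ℝ => Real.exp (-a * u ^ 2 / 2)) := by
  rw [gauss_eq]
  exact integrable_exp_neg_mul_sq (by linarith)

lemma tail_nonneg (a s : ℝ) : 0 ≤ tail a s :=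
  setIntegral_nonneg measurableSet_Ioi fun _ _ => (Real.exp_pos _).le

lemma tail_antitone {a : ℝ} (ha : 0 < a) : Antitone (tail a) := by
  intro s t hst
  exact setIntegral_mono_set ((gauss_integrable ha).integrableOn)
    (Filter.Eventually.of_forall fun u => (Real.exp_pos _).le)
    (HasSubset.Subset.eventuallyLE (Ioi_subset_Ioi hst))

lemma tail_shift {a : ℝ} (s : ℝ) :
    ∫ u in Set.Ioi s, Real.exp (-a * (u - s) ^ 2 / 2)
      = ∫ u in Set.Ioi (0:ℝ), Real.exp (-a * u ^ 2 / 2) := by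
  have h := (measurePreserving_add_right (volume : Measure ℝ) s).setIntegral_preimage_emb
    (measurableEmbedding_addRight s) (fun u => Real.exp (-a * (u - s) ^ 2 / 2)) (Ioi s)
  have hpre : (· + s) ⁻¹' Ioi s = Ioi (0:ℝ) := by
    ext x; simp [lt_add_iff_pos_left]
  rw [hpre] at h
  rw [← h]
  congr 1 with x
  ring_nf

lemma gauss_Ioi_zero {a : ℝ} (ha : 0 < a) :
    ∫ u in Set.Ioi (0:ℝ), Real.exp (-a * u ^ 2 / 2) ≤ Real.sqrt (2 / a) := by
  rw [gauss_eq]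
  rw [integral_gaussian_Ioi]
  have h4 : Real.sqrt (π / (a/2)) ≤ Real.sqrt (8 / a) := by
    apply Real.sqrt_le_sqrt
    rw [div_le_div_iff₀ (by linarith) ha]
    nlinarith [pi_le_four]
  have h8 : Real.sqrt (8 / a) = 2 * Real.sqrt (2 / a) := by
    rw [show (8:ℝ)/a = 4 * (2/a) by ring, Real.sqrt_mul (by norm_num),
      show (4:ℝ) = 2^2 by norm_num, Real.sqrt_sq (by norm_num)]
  linarith

lemma tail_le_sqrt {a : ℝ} (ha : 0 < a) {s : ℝ} (hs : 0 ≤ s) :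
    tail a s ≤ Real.exp (-a * s ^ 2 / 2) * Real.sqrt (2 / a) := by
  have step1 : tail a s ≤ ∫ u in Set.Ioi s,
      Real.exp (-a * s ^ 2 / 2) * Real.exp (-a * (u - s) ^ 2 / 2) := by
    apply setIntegral_mono_on (gauss_integrable ha).integrableOn
    · have : Integrable (fun u : ℝ => Real.exp (-a * (u - s) ^ 2 / 2)) :=
        (gauss_integrable ha).comp_sub_right s
      exact (this.const_mul _).integrableOn
    · exact measurableSet_Ioi
    · intro u hu
      rw [← Real.exp_add, Real.exp_le_exp]
      have h : s ≤ u := le_of_lt hu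
      nlinarith [mul_nonneg (mul_nonneg ha.le hs) (sub_nonneg.2 h)]
  have step2 : ∫ u in Set.Ioi s,
      Real.exp (-a * s ^ 2 / 2) * Real.exp (-a * (u - s) ^ 2 / 2)
      = Real.exp (-a * s ^ 2 / 2) * ∫ u in Set.Ioi (0:ℝ), Real.exp (-a * u ^ 2 / 2) := by
    rw [integral_const_mul, tail_shift]
  calc tail a s ≤ _ := step1
    _ = _ := step2
    _ ≤ _ := mul_le_mul_of_nonneg_left (gauss_Ioi_zero ha) (Real.exp_pos _).le

lemma integral_mul_gauss_Ioi {a : ℝ} (ha : 0 < a) (s : ℝ) :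
    ∫ u in Set.Ioi s, u * Real.exp (-a * u ^ 2 / 2) = Real.exp (-a * s ^ 2 / 2) / a := by
  have hint : Integrable (fun u : ℝ => u * Real.exp (-a * u ^ 2 / 2)) := by
    have := integrable_mul_exp_neg_mul_sq (b := a/2) (by linarith)
    convert this using 2 with u
    ring_nf
  have hderiv : ∀ x ∈ Set.Ioi s,
      HasDerivAt (fun u : ℝ => -Real.exp (-a * u ^ 2 / 2) / a)
        (x * Real.exp (-a * x ^ 2 / 2)) x := by
    intro x _
    have h1 : HasDerivAt (fun u : ℝ => -a * u ^ 2 / 2) (-a * x) x := by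
      have := ((hasDerivAt_pow 2 x).const_mul (-a)).div_const 2
      simpa using this.congr_deriv (by ring)
    have h2 := (h1.exp).neg.div_const a
    refine h2.congr_deriv ?_
    rw [div_eq_iff ha.ne']
    ring
  have htends : Filter.Tendsto (fun u : ℝ => -Real.exp (-a * u ^ 2 / 2) / a)
      Filter.atTop (nhds 0) := by
    have h1 : Filter.Tendsto (fun u : ℝ => -a * u ^ 2 / 2) Filter.atTop Filter.atBot := by
      apply Filter.Tendsto.atBot_div_const (by norm_num)
      apply Filter.Tendsto.const_mul_atTop_of_neg (by linarith)
      exact Filter.tendsto_pow_atTop (by norm_num)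
    have := (Real.tendsto_exp_atBot.comp h1).neg.div_const a
    simpa using this
  have := integral_Ioi_of_hasDerivAt_of_tendsto
    (((Real.continuous_exp.comp (by continuity)).neg.div_const a).continuousWithinAt)
    hderiv hint.integrableOn htends
  rw [this]
  simp [Function.comp]
  ring

lemma tail_le_inv {a : ℝ} (ha : 0 < a) {s : ℝ} (hs : 0 < s) :
    tail a s ≤ Real.exp (-a * s ^ 2 / 2) / (a * s) := by
  have hint : Integrable (fun u : ℝ => u * Real.exp (-a * u ^ 2 / 2)) := by
    have := integrable_mul_exp_neg_mul_sq (b := a/2) (by linarith)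
    convert this using 2 with u
    ring_nf
  have step1 : tail a s ≤ ∫ u in Set.Ioi s, (1/s) * (u * Real.exp (-a * u ^ 2 / 2)) := by
    apply setIntegral_mono_on (gauss_integrable ha).integrableOn
      ((hint.const_mul _).integrableOn) measurableSet_Ioi
    intro u hu
    have hus : s < u := hu
    rw [show (1/s) * (u * Real.exp (-a * u ^ 2 / 2)) = (u/s) * Real.exp (-a * u ^ 2 / 2) by ring]
    nth_rewrite 1 [← one_mul (Real.exp (-a * u ^ 2 / 2))]
    apply mul_le_mul_of_nonneg_right _ (Real.exp_pos _).le
    rw [le_div_iff₀ hs]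
    linarith
  rw [integral_const_mul, integral_mul_gauss_Ioi ha] at step1
  calc tail a s ≤ _ := step1
    _ = Real.exp (-a * s ^ 2 / 2) / (a * s) := by field_simp

section F

variable {c ε : ℝ}

lemma F_le_sqrt (hε : 0 < ε) (hεc : ε < c) {s : ℝ} (hs : 0 ≤ s) :
    Real.exp (c * s ^ 2 / 2) * tail (c - ε) s
      ≤ Real.sqrt (2 / (c - ε)) * Real.exp (ε * s ^ 2 / 2) := by
  have ha : 0 < c - ε := by linarith
  calc Real.exp (c * s ^ 2 / 2) * tail (c - ε) s
      ≤ Real.exp (c * s ^ 2 / 2) *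
        (Real.exp (-(c - ε) * s ^ 2 / 2) * Real.sqrt (2 / (c - ε))) :=
        mul_le_mul_of_nonneg_left (tail_le_sqrt ha hs) (Real.exp_pos _).le
    _ = _ := by
        rw [← mul_assoc, ← Real.exp_add,
          show c * s ^ 2 / 2 + -(c - ε) * s ^ 2 / 2 = ε * s ^ 2 / 2 by ring, mul_comm]

lemma F_le_inv (hε : 0 < ε) (hεc : ε < c) {s : ℝ} (hs : 0 < s) :
    Real.exp (c * s ^ 2 / 2) * tail (c - ε) s
      ≤ Real.exp (ε * s ^ 2 / 2) / ((c - ε) * s) := by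
  have ha : 0 < c - ε := by linarith
  calc Real.exp (c * s ^ 2 / 2) * tail (c - ε) s
      ≤ Real.exp (c * s ^ 2 / 2) * (Real.exp (-(c - ε) * s ^ 2 / 2) / ((c - ε) * s)) :=
        mul_le_mul_of_nonneg_left (tail_le_inv ha hs) (Real.exp_pos _).le
    _ = _ := by
        rw [mul_div_assoc', ← Real.exp_add,
          show c * s ^ 2 / 2 + -(c - ε) * s ^ 2 / 2 = ε * s ^ 2 / 2 by ring]

lemma F_meas (hε : 0 < ε) (hεc : ε < c) :
    Measurable (fun s : ℝ => Real.exp (c * s ^ 2 / 2) * tail (c - ε) s) := by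
  have ha : 0 < c - ε := by linarith
  exact (Real.continuous_exp.comp (by continuity)).measurable.mul
    (tail_antitone ha).measurable

lemma F_intInt (hε : 0 < ε) (hεc : ε < c) {p q : ℝ} (hp : 0 ≤ p) (hpq : p ≤ q) :
    IntervalIntegrable (fun s : ℝ => Real.exp (c * s ^ 2 / 2) * tail (c - ε) s)
      volume p q := by
  rw [intervalIntegrable_iff_integrableOn_Ioc_of_le hpq]
  apply Integrable.mono'
    (g := fun _ : ℝ => Real.sqrt (2 / (c - ε)) * Real.exp (ε * q ^ 2 / 2))
    (integrableOn_const measure_Ioc_lt_top.ne)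
    ((F_meas hε hεc).aestronglyMeasurable.restrict)
  filter_upwards [ae_restrict_mem measurableSet_Ioc] with s hs
  have hs0 : 0 ≤ s := le_trans hp hs.1.le
  rw [Real.norm_eq_abs, abs_of_nonneg
    (mul_nonneg (Real.exp_pos _).le (tail_nonneg _ _))]
  refine le_trans (F_le_sqrt hε hεc hs0) ?_
  apply mul_le_mul_of_nonneg_left _ (Real.sqrt_nonneg _)
  apply Real.exp_le_exp.2
  have : s ^ 2 ≤ q ^ 2 := by nlinarith [hs.2]
  nlinarith

end F

end Stmt3Aux


lemma arith1 (ε y S E r : ℝ) (hε : ε ≠ 0) (hy : y ≠ 0) :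
    (2 * E / ε) * (1 + 2 / y) * S * (ε * r ^ 2 / 2) = S * E * (r ^ 2 * (1 + 2 / y)) := by
  field_simp

set_option maxHeartbeats 2000000 in
theorem stmt_3 (c ε : ℝ) (hε : 0 < ε) (hεc : ε < c) :
    ∀ r : ℝ, 0 < r → psi1 c ε r ≤ C0const ε c * psi2 ε r := by
  intro r hr
  have ha : 0 < c - ε := by linarith
  have hSε : 0 < Real.sqrt ε := Real.sqrt_pos.2 hε
  have hSεsq : Real.sqrt ε ^ 2 = ε := Real.sq_sqrt hε.le
  have hSpos : 0 < Real.sqrt (2 / (c - ε)) := Real.sqrt_pos.2 (by positivity)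
  set S : ℝ := Real.sqrt (2 / (c - ε)) with hSdef
  set X : ℝ := ε * r ^ 2 / 2 with hXdef
  have hX0 : 0 < X := by positivity
  have heX1 : 1 < Real.exp X := Real.one_lt_exp_iff.2 hX0
  have hXeX : X ≤ Real.exp X := by linarith [Real.add_one_le_exp X]
  have hrr : 0 < r * (1 + r) := by positivity
  have hψpos : 0 < psi2 ε r := by
    unfold psi2
    rw [← hXdef]
    exact div_pos (by linarith) hrr
  have hψeq : psi2 ε r = (Real.exp X - 1) / (r * (1 + r)) := rfl
  have hpsi1 : psi1 c ε r
      = ∫ s in (0:ℝ)..r, Real.exp (c * s ^ 2 / 2) * Stmt3Aux.tail (c - ε) s := rfl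
  clear_value S X
  rcases le_or_gt r (2 / Real.sqrt ε) with hcase | hcase
  · -- Case 1: small r
    have h1 : psi1 c ε r ≤ ∫ s in (0:ℝ)..r, S * Real.exp (ε * s ^ 2 / 2) := by
      rw [hpsi1]
      apply intervalIntegral.integral_mono_on hr.le (Stmt3Aux.F_intInt hε hεc le_rfl hr.le)
        (Continuous.intervalIntegrable (by continuity) _ _)
      intro s hs
      rw [hSdef]
      exact Stmt3Aux.F_le_sqrt hε hεc hs.1
    have h2 : (∫ s in (0:ℝ)..r, S * Real.exp (ε * s ^ 2 / 2)) ≤ r * (S * Real.exp X) := by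
      have hmono := intervalIntegral.integral_mono_on (a := (0:ℝ)) (b := r) (μ := volume)
        (f := fun s => S * Real.exp (ε * s ^ 2 / 2)) (g := fun _ => S * Real.exp X)
        hr.le (Continuous.intervalIntegrable (by continuity) _ _) intervalIntegrable_const
        (by
          intro s hs
          apply mul_le_mul_of_nonneg_left _ hSpos.le
          apply Real.exp_le_exp.2
          rw [hXdef]
          have hsq : s ^ 2 ≤ r ^ 2 := pow_le_pow_left₀ hs.1 hs.2 2
          have := mul_le_mul_of_nonneg_left hsq hε.le
          linarith)
      rw [intervalIntegral.integral_const] at hmono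
      simpa using hmono
    set K1 : ℝ := (2 * Real.exp 2 / ε) * (1 + 2 / Real.sqrt ε) * S with hK1def
    clear_value K1
    have hK1pos : 0 < K1 := by rw [hK1def]; positivity
    have hXle2 : X ≤ 2 := by
      rw [hXdef]
      have h2' : r ^ 2 ≤ (2 / Real.sqrt ε) ^ 2 := pow_le_pow_left₀ hr.le hcase 2
      rw [div_pow, hSεsq] at h2'
      rw [le_div_iff₀ hε] at h2'
      linarith
    have heXle : Real.exp X ≤ Real.exp 2 := Real.exp_le_exp.2 hXle2
    have key : r * (S * Real.exp X) ≤ K1 * psi2 ε r := by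
      rw [hψeq, ← mul_div_assoc, le_div_iff₀ hrr]
      have e3 : r * (S * Real.exp X) * (r * (1 + r))
          = S * Real.exp X * (r ^ 2 * (1 + r)) := by ring
      have e4 : S * Real.exp X * (r ^ 2 * (1 + r))
          ≤ S * Real.exp 2 * (r ^ 2 * (1 + 2 / Real.sqrt ε)) := by
        gcongr
      have e2 : K1 * X = S * Real.exp 2 * (r ^ 2 * (1 + 2 / Real.sqrt ε)) := by
        rw [hK1def, hXdef]
        exact arith1 ε (Real.sqrt ε) S (Real.exp 2) r hε.ne' hSε.ne'
      have e1 : K1 * X ≤ K1 * (Real.exp X - 1) :=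
        mul_le_mul_of_nonneg_left (by linarith [Real.add_one_le_exp X]) hK1pos.le
      linarith
    calc psi1 c ε r ≤ r * (S * Real.exp X) := le_trans h1 h2
      _ ≤ K1 * psi2 ε r := key
      _ ≤ C0const ε c * psi2 ε r :=
          mul_le_mul_of_nonneg_right (by rw [hK1def, hSdef]; unfold C0const; exact le_max_left _ _) hψpos.le
  · -- Case 2: large r
    set r₀ : ℝ := 2 / Real.sqrt ε with hr₀def
    clear_value r₀
    have hr₀pos : 0 < r₀ := by rw [hr₀def]; positivity
    have hεr₀ : ε * r₀ ^ 2 = 4 := by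
      rw [hr₀def, div_pow, hSεsq]
      rw [mul_div_assoc', mul_comm, mul_div_assoc, div_self hε.ne', mul_one]
      norm_num
    have hSεr : 2 ≤ Real.sqrt ε * r := by
      rw [hr₀def, div_lt_iff₀ hSε] at hcase
      linarith
    have hX2 : 2 ≤ X := by
      rw [hXdef]
      have h := mul_le_mul hSεr hSεr (by norm_num) (by positivity)
      have heq : (Real.sqrt ε * r) * (Real.sqrt ε * r) = ε * r ^ 2 := by
        linear_combination r ^ 2 * hSεsq
      linarith
    have hsplit := intervalIntegral.integral_add_adjacent_intervals
      (Stmt3Aux.F_intInt hε hεc (le_refl (0:ℝ)) hr₀pos.le)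
      (Stmt3Aux.F_intInt hε hεc hr₀pos.le hcase.le)
    have hpsi1eq : psi1 c ε r
        = (∫ s in (0:ℝ)..r₀, Real.exp (c * s ^ 2 / 2) * Stmt3Aux.tail (c - ε) s)
          + ∫ s in r₀..r, Real.exp (c * s ^ 2 / 2) * Stmt3Aux.tail (c - ε) s := by
      rw [hpsi1, ← hsplit]
    -- bound the first piece
    have hI1 : (∫ s in (0:ℝ)..r₀, Real.exp (c * s ^ 2 / 2) * Stmt3Aux.tail (c - ε) s)
        ≤ r₀ * (S * Real.exp 2) := by
      have hmono := intervalIntegral.integral_mono_on (a := (0:ℝ)) (b := r₀) (μ := volume)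
        (g := fun _ => S * Real.exp 2)
        hr₀pos.le (Stmt3Aux.F_intInt hε hεc le_rfl hr₀pos.le) intervalIntegrable_const
        (by
          intro s hs
          refine le_trans (Stmt3Aux.F_le_sqrt hε hεc hs.1) ?_
          rw [hSdef]
          apply mul_le_mul_of_nonneg_left _ (Real.sqrt_nonneg _)
          apply Real.exp_le_exp.2
          have hsq : s ^ 2 ≤ r₀ ^ 2 := pow_le_pow_left₀ hs.1 hs.2 2
          have := mul_le_mul_of_nonneg_left hsq hε.le
          linarith)
      rw [intervalIntegral.integral_const] at hmono
      simpa using hmono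
    -- FTC bound for the second piece
    have huIcc : Set.uIcc r₀ r = Set.Icc r₀ r := Set.uIcc_of_le hcase.le
    have hg' : ∀ x ∈ Set.uIcc r₀ r,
        HasDerivAt (fun s : ℝ => 2 * Real.exp (ε * s ^ 2 / 2) / (ε * s ^ 2))
          (2 * Real.exp (ε * x ^ 2 / 2) / x - 4 * Real.exp (ε * x ^ 2 / 2) / (ε * x ^ 3)) x := by
      intro x hx
      rw [huIcc] at hx
      have hx0 : 0 < x := lt_of_lt_of_le hr₀pos hx.1
      have h1 : HasDerivAt (fun s : ℝ => ε * s ^ 2 / 2) (ε * x) x := by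
        have := ((hasDerivAt_pow 2 x).const_mul ε).div_const 2
        simpa using this.congr_deriv (by ring)
      have hnum : HasDerivAt (fun s : ℝ => 2 * Real.exp (ε * s ^ 2 / 2))
          (2 * (Real.exp (ε * x ^ 2 / 2) * (ε * x))) x := (h1.exp).const_mul 2
      have hden : HasDerivAt (fun s : ℝ => ε * s ^ 2) (ε * (2 * x)) x := by
        simpa [mul_comm, mul_assoc] using ((hasDerivAt_pow 2 x).const_mul ε)
      have hne : ε * x ^ 2 ≠ 0 := by positivity
      have := hnum.div hden hne
      refine this.congr_deriv ?_
      field_simp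
      ring
    have hg'cont : ContinuousOn
        (fun x : ℝ => 2 * Real.exp (ε * x ^ 2 / 2) / x - 4 * Real.exp (ε * x ^ 2 / 2) / (ε * x ^ 3))
        (Set.uIcc r₀ r) := by
      rw [huIcc]
      apply ContinuousOn.sub
      · exact ContinuousOn.div (by fun_prop) continuousOn_id
          (fun x hx => ne_of_gt (lt_of_lt_of_le hr₀pos hx.1))
      · exact ContinuousOn.div (by fun_prop) (by fun_prop)
          (fun x hx => by
            have : 0 < x := lt_of_lt_of_le hr₀pos hx.1
            positivity)
    have hftc := intervalIntegral.integral_eq_sub_of_hasDerivAt hg'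
      (hg'cont.intervalIntegrable)
    have hI2 : (∫ s in r₀..r, Real.exp (c * s ^ 2 / 2) * Stmt3Aux.tail (c - ε) s)
        ≤ (2 * Real.exp X / (ε * r ^ 2)) / (c - ε) := by
      have hstep : (∫ s in r₀..r, Real.exp (c * s ^ 2 / 2) * Stmt3Aux.tail (c - ε) s)
          ≤ ∫ s in r₀..r,
            (2 * Real.exp (ε * s ^ 2 / 2) / s - 4 * Real.exp (ε * s ^ 2 / 2) / (ε * s ^ 3))
              / (c - ε) := by
        apply intervalIntegral.integral_mono_on hcase.le
          (Stmt3Aux.F_intInt hε hεc hr₀pos.le hcase.le)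
          ((hg'cont.div_const _).intervalIntegrable)
        intro s hs
        have hs0 : 0 < s := lt_of_lt_of_le hr₀pos hs.1
        have hεs2 : 4 ≤ ε * s ^ 2 := by
          have hsq : r₀ ^ 2 ≤ s ^ 2 := pow_le_pow_left₀ hr₀pos.le hs.1 2
          have := mul_le_mul_of_nonneg_left hsq hε.le
          linarith
        refine le_trans (Stmt3Aux.F_le_inv hε hεc hs0) ?_
        have h4 : 4 * Real.exp (ε * s ^ 2 / 2) / (ε * s ^ 3)
            ≤ Real.exp (ε * s ^ 2 / 2) / s := by
          rw [div_le_div_iff₀ (by positivity) hs0]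
          have hmul := mul_le_mul_of_nonneg_left hεs2
            (mul_nonneg (Real.exp_pos (ε * s ^ 2 / 2)).le hs0.le)
          have heq : Real.exp (ε * s ^ 2 / 2) * s * (ε * s ^ 2)
              = Real.exp (ε * s ^ 2 / 2) * (ε * s ^ 3) := by ring
          linarith
        have hkey : Real.exp (ε * s ^ 2 / 2) / s
            ≤ 2 * Real.exp (ε * s ^ 2 / 2) / s - 4 * Real.exp (ε * s ^ 2 / 2) / (ε * s ^ 3) := by
          have : 2 * Real.exp (ε * s ^ 2 / 2) / s = 2 * (Real.exp (ε * s ^ 2 / 2) / s) := by ring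
          linarith [h4, this.ge]
        calc Real.exp (ε * s ^ 2 / 2) / ((c - ε) * s)
            = (Real.exp (ε * s ^ 2 / 2) / s) / (c - ε) := by
              rw [div_div, mul_comm s (c - ε)]
          _ ≤ _ := by gcongr
      rw [intervalIntegral.integral_div, hftc] at hstep
      refine le_trans hstep ?_
      gcongr
      have hg0 : 0 ≤ 2 * Real.exp (ε * r₀ ^ 2 / 2) / (ε * r₀ ^ 2) := by positivity
      rw [hXdef]
      linarith
    -- final arithmetic
    set Sca : ℝ := Real.sqrt (c - ε) with hScadef
    have hSca : 0 < Sca := Real.sqrt_pos.2 ha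
    have hScasq : Sca ^ 2 = c - ε := Real.sq_sqrt ha.le
    clear_value Sca
    have hS2 : 0 < Real.sqrt 2 := Real.sqrt_pos.2 (by norm_num)
    have hSeq : S = Real.sqrt 2 / Sca := by
      rw [hSdef, hScadef, Real.sqrt_div (by norm_num : (0:ℝ) ≤ 2)]
    have hSmul : Real.sqrt (ε * (c - ε)) = Real.sqrt ε * Sca := by
      rw [hScadef, Real.sqrt_mul hε.le]
    set E2 : ℝ := Real.exp 2 with hE2def
    have hE2 : 0 < E2 := Real.exp_pos 2
    have h1Ei : 0 < 1 - Real.exp (-2) := by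
      have h : Real.exp (-2) < Real.exp 0 := Real.exp_lt_exp.2 (by norm_num)
      simp only [Real.exp_zero] at h
      linarith
    set K2 : ℝ := ((2 + Real.sqrt ε) / (ε * (1 - Real.exp (-2)))) *
      (2 * Real.sqrt 2 * E2 / Real.sqrt (ε * (c - ε)) + 1 / (c - ε)) with hK2def
    clear_value K2
    have hSmulpos : 0 < Real.sqrt (ε * (c - ε)) := by rw [hSmul]; positivity
    have hK2pos : 0 < K2 := by
      rw [hK2def]
      apply mul_pos (div_pos (by positivity) (mul_pos hε h1Ei))
      positivity
    have hK2C0 : K2 ≤ C0const ε c := by rw [hK2def, hE2def]; unfold C0const; exact le_max_right _ _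
    have hlow1 : (1 - Real.exp (-2)) * Real.exp X ≤ Real.exp X - 1 := by
      have h : (1:ℝ) ≤ Real.exp (-2) * Real.exp X := by
        rw [← Real.exp_add]
        exact Real.one_le_exp (by linarith)
      have hexpand : (1 - Real.exp (-2)) * Real.exp X
          = Real.exp X - Real.exp (-2) * Real.exp X := by ring
      linarith
    have hdenle : r * (1 + r) ≤ r ^ 2 * (2 + Real.sqrt ε) / 2 := by
      have := mul_le_mul_of_nonneg_right hSεr hr.le
      nlinarith [this]
    have hnum0 : 0 ≤ (1 - Real.exp (-2)) * Real.exp X :=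
      mul_nonneg h1Ei.le (Real.exp_pos _).le
    have hψlow : 2 * (1 - Real.exp (-2)) * Real.exp X / ((2 + Real.sqrt ε) * r ^ 2)
        ≤ psi2 ε r := by
      rw [hψeq]
      have e0 : 2 * (1 - Real.exp (-2)) * Real.exp X / ((2 + Real.sqrt ε) * r ^ 2)
          = ((1 - Real.exp (-2)) * Real.exp X) / (r ^ 2 * (2 + Real.sqrt ε) / 2) := by
        rw [div_eq_div_iff (by positivity) (by positivity)]
        ring
      rw [e0]
      calc ((1 - Real.exp (-2)) * Real.exp X) / (r ^ 2 * (2 + Real.sqrt ε) / 2)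
          ≤ ((1 - Real.exp (-2)) * Real.exp X) / (r * (1 + r)) := by
            apply div_le_div_of_nonneg_left hnum0 hrr hdenle
        _ ≤ (Real.exp X - 1) / (r * (1 + r)) := (div_le_div_iff_of_pos_right hrr).2 hlow1
    -- piece A bound
    have hεr2 : ε * r ^ 2 = 2 * X := by rw [hXdef]; ring
    have hA : r₀ * (S * E2)
        ≤ (2 / ε) * (2 * Real.sqrt 2 * E2 / Real.sqrt (ε * (c - ε))) * Real.exp X / r ^ 2 := by
      rw [hr₀def, hSeq, hSmul]
      have lhs_eq : 2 / Real.sqrt ε * (Real.sqrt 2 / Sca * E2)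
          = 2 * Real.sqrt 2 * E2 / (Real.sqrt ε * Sca) := by
        field_simp
      have rhs_eq : (2 / ε) * (2 * Real.sqrt 2 * E2 / (Real.sqrt ε * Sca)) * Real.exp X / r ^ 2
          = 4 * Real.sqrt 2 * E2 * Real.exp X / (ε * Real.sqrt ε * Sca * r ^ 2) := by
        field_simp
        ring
      rw [lhs_eq, rhs_eq, div_le_div_iff₀ (by positivity) (by positivity)]
      have h1 : 2 * Real.sqrt 2 * E2 * (ε * Real.sqrt ε * Sca * r ^ 2)
          = 4 * Real.sqrt 2 * E2 * Real.sqrt ε * Sca * X := by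
        linear_combination (2 * Real.sqrt 2 * E2 * Real.sqrt ε * Sca) * hεr2
      have base : (0:ℝ) ≤ 4 * Real.sqrt 2 * E2 * Real.sqrt ε * Sca := by positivity
      linarith [h1, mul_le_mul_of_nonneg_left hXeX base]
    have hB : (2 * Real.exp X / (ε * r ^ 2)) / (c - ε)
        = (2 / ε) * (1 / (c - ε)) * Real.exp X / r ^ 2 := by
      field_simp
    have hRHS : (2 / ε) * (2 * Real.sqrt 2 * E2 / Real.sqrt (ε * (c - ε))) * Real.exp X / r ^ 2
          + (2 / ε) * (1 / (c - ε)) * Real.exp X / r ^ 2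
        = K2 * (2 * (1 - Real.exp (-2)) * Real.exp X / ((2 + Real.sqrt ε) * r ^ 2)) := by
      rw [hK2def]
      have hne1 : ε ≠ 0 := ne_of_gt hε
      have hne2 : (1 - Real.exp (-2)) ≠ 0 := ne_of_gt h1Ei
      have hne3 : (2 + Real.sqrt ε) ≠ 0 := by positivity
      have hne4 : r ≠ 0 := ne_of_gt hr
      have hne5 : Real.sqrt (ε * (c - ε)) ≠ 0 := ne_of_gt hSmulpos
      have hne6 : (c - ε) ≠ 0 := ne_of_gt ha
      field_simp
    calc psi1 c ε r
        = (∫ s in (0:ℝ)..r₀, Real.exp (c * s ^ 2 / 2) * Stmt3Aux.tail (c - ε) s)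
          + ∫ s in r₀..r, Real.exp (c * s ^ 2 / 2) * Stmt3Aux.tail (c - ε) s := hpsi1eq
      _ ≤ r₀ * (S * E2) + (2 * Real.exp X / (ε * r ^ 2)) / (c - ε) := add_le_add hI1 hI2
      _ ≤ (2 / ε) * (2 * Real.sqrt 2 * E2 / Real.sqrt (ε * (c - ε))) * Real.exp X / r ^ 2
          + (2 / ε) * (1 / (c - ε)) * Real.exp X / r ^ 2 := by
          rw [hB]
          exact add_le_add hA le_rfl
      _ = K2 * (2 * (1 - Real.exp (-2)) * Real.exp X / ((2 + Real.sqrt ε) * r ^ 2)) := hRHS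
      _ ≤ K2 * psi2 ε r := mul_le_mul_of_nonneg_left hψlow hK2pos.le
      _ ≤ C0const ε c * psi2 ε r := mul_le_mul_of_nonneg_right hK2C0 hψpos.le
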